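/- Let T be a bounded linear operator on a Banach space B such that for every x ∈ B with T^n x ≠ 0 for all n ≥ 0, the sequence T^n x / ‖T^n x‖ converges weakly to 0 (i.e., T is antisupercyclic). Then for every x ∈ B, the projective orbit O_pr(T,x) = {λ T^n x : λ ∈ ℂ, n ∈ ℕ₀} is weakly sequentially closed in B. -/

import Mathlib

open Filter

/-- Theorem 2.1: if `T` is an antisupercyclic bounded operator on a Banach space `B`
(that is, `T^n x / ‖T^n x‖ → 0` weakly whenever `T^n x ≠ 0` for all `n`), then every
projective orbit `{λ • T^n x}` is weakly sequentially closed. -/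
theorem projOrbit_weaklySeqClosed_of_antisupercyclic
    {B : Type*} [NormedAddCommGroup B] [NormedSpace ℂ B] [CompleteSpace B]
    (T : B →L[ℂ] B)
    (hT : ∀ x : B, (∀ n : ℕ, (T ^ n) x ≠ 0) → ∀ f : B →L[ℂ] ℂ,
      Tendsto (fun n : ℕ => f (‖(T ^ n) x‖⁻¹ • (T ^ n) x)) atTop (nhds 0))
    (x : B) (y : B) (u : ℕ → B)
    (hu : ∀ k, u k ∈ {v : B | ∃ (lam : ℂ) (n : ℕ), v = lam • (T ^ n) x})
    (hconv : ∀ f : B →L[ℂ] ℂ, Tendsto (fun k => f (u k)) atTop (nhds (f y))) :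
    y ∈ {v : B | ∃ (lam : ℂ) (n : ℕ), v = lam • (T ^ n) x} := by
  classical
  -- choose representations
  choose lam nn hrep using hu
  by_cases hy : y = 0
  · exact ⟨0, 0, by simp [hy]⟩
  -- a functional separating y from 0
  obtain ⟨f₀, hf₀⟩ := SeparatingDual.exists_ne_zero (R := ℂ) hy
  -- the sequence u is norm-bounded, by Banach–Steinhaus in the dual
  obtain ⟨M, hM⟩ : ∃ M : ℝ, ∀ k, ‖u k‖ ≤ M := by
    obtain ⟨C, hC⟩ := banach_steinhaus
      (g := fun k : ℕ => NormedSpace.inclusionInDoubleDual ℂ B (u k)) (fun f => by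
        obtain ⟨C, hC⟩ := (hconv f).norm.bddAbove_range
        exact ⟨C, fun k => hC ⟨k, rfl⟩⟩)
    refine ⟨C, fun k => ?_⟩
    have := hC k
    rwa [← (NormedSpace.inclusionInDoubleDualLi ℂ (E := B)).norm_map (u k)]
  by_cases hinf : ∃ n : ℕ, {k : ℕ | u k ≠ 0 ∧ nn k = n}.Infinite
  · -- some power occurs infinitely often among nonzero terms
    obtain ⟨n, hn⟩ := hinf
    obtain ⟨φ, hφmono, hφ⟩ := extraction_of_frequently_atTop
      (Nat.frequently_atTop_iff_infinite.2 hn)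
    have hTnx : (T ^ n) x ≠ 0 := by
      intro h
      have := (hφ 0).1
      rw [hrep (φ 0), (hφ 0).2, h, smul_zero] at this
      exact this rfl
    obtain ⟨g, hg⟩ := SeparatingDual.exists_ne_zero (R := ℂ) hTnx
    -- the coefficients converge
    have hlam : Tendsto (fun j => lam (φ j)) atTop (nhds (g y / g ((T ^ n) x))) := by
      have h1 : Tendsto (fun j => g (u (φ j))) atTop (nhds (g y)) :=
        (hconv g).comp (hφmono.tendsto_atTop)
      have h2 : ∀ j, lam (φ j) = g (u (φ j)) / g ((T ^ n) x) := by
        intro j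
        rw [hrep (φ j), (hφ j).2, map_smul]
        field_simp
        rw [smul_eq_mul]
      simp only [h2]
      exact h1.div_const _
    refine ⟨g y / g ((T ^ n) x), n, ?_⟩
    rw [NormedSpace.eq_iff_forall_dual_eq ℂ]
    intro h
    have hA : Tendsto (fun j => h (u (φ j))) atTop (nhds (h y)) :=
      (hconv h).comp hφmono.tendsto_atTop
    have hB : Tendsto (fun j => h (u (φ j))) atTop
        (nhds (h ((g y / g ((T ^ n) x)) • (T ^ n) x))) := by
      have hform : ∀ j, h (u (φ j)) = lam (φ j) * h ((T ^ n) x) := by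
        intro j; rw [hrep (φ j), (hφ j).2, map_smul, smul_eq_mul]
      rw [map_smul, smul_eq_mul]
      simp only [hform]
      exact hlam.mul_const _
    exact tendsto_nhds_unique hA hB
  · -- all powers occur finitely often: then ⟪f, u k⟫ → 0 for every f, so y = 0
    push_neg at hinf
    exfalso
    apply hf₀
    have key : Tendsto (fun k => f₀ (u k)) atTop (nhds 0) := by
      by_cases hx : ∀ m : ℕ, (T ^ m) x ≠ 0
      · -- use antisupercyclicity
        have hM' : (0:ℝ) < max M 1 := lt_of_lt_of_le one_pos (le_max_right _ _)
        rw [Metric.tendsto_atTop]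
        intro ε hε
        have hT' := hT x hx f₀
        rw [Metric.tendsto_atTop] at hT'
        obtain ⟨N, hN⟩ := hT' (ε / max M 1) (div_pos hε hM')
        -- the indices with small power and nonzero value are finite
        have hfin : {k : ℕ | u k ≠ 0 ∧ nn k < N}.Finite := by
          have : {k : ℕ | u k ≠ 0 ∧ nn k < N} ⊆
              ⋃ n ∈ Finset.range N, {k : ℕ | u k ≠ 0 ∧ nn k = n} := by
            intro k hk
            simp only [Set.mem_iUnion, Finset.mem_range]
            exact ⟨nn k, hk.2, hk.1, rfl⟩
          exact Set.Finite.subset (Set.Finite.biUnion (Finset.range N).finite_toSet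
            (fun n _ => hinf n)) this
        obtain ⟨K, hK⟩ : ∃ K : ℕ, ∀ k ≥ K, k ∉ {k : ℕ | u k ≠ 0 ∧ nn k < N} := by
          rcases Set.Finite.bddAbove hfin with ⟨K, hK⟩
          exact ⟨K + 1, fun k hk hkmem => by
            have := hK hkmem; omega⟩
        refine ⟨K, fun k hk => ?_⟩
        rw [dist_zero_right]
        by_cases huk : u k = 0
        · simpa [huk] using hε
        · have hknn : N ≤ nn k := by
            by_contra h
            exact hK k hk ⟨huk, not_le.1 h⟩
          have hTk : (T ^ nn k) x ≠ 0 := by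
            intro h
            apply huk
            rw [hrep k, h, smul_zero]
          have hdist := hN (nn k) hknn
          rw [dist_zero_right] at hdist
          have hunit : ‖f₀ (‖(T ^ nn k) x‖⁻¹ • (T ^ nn k) x)‖
              = ‖(T ^ nn k) x‖⁻¹ * ‖f₀ ((T ^ nn k) x)‖ := by
            rw [ContinuousLinearMap.map_smul_of_tower, norm_smul, norm_inv, norm_norm]
          rw [hunit] at hdist
          have hval : ‖f₀ (u k)‖ = ‖lam k‖ * ‖f₀ ((T ^ nn k) x)‖ := by
            rw [hrep k, map_smul, norm_smul]
          have hnorm : ‖lam k‖ * ‖(T ^ nn k) x‖ ≤ max M 1 := by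
            calc ‖lam k‖ * ‖(T ^ nn k) x‖ = ‖u k‖ := by rw [hrep k, norm_smul]
            _ ≤ M := hM k
            _ ≤ max M 1 := le_max_left _ _
          have hpos : (0:ℝ) < ‖(T ^ nn k) x‖ := norm_pos_iff.2 hTk
          rw [hval]
          calc ‖lam k‖ * ‖f₀ ((T ^ nn k) x)‖
              = (‖lam k‖ * ‖(T ^ nn k) x‖) * (‖(T ^ nn k) x‖⁻¹ * ‖f₀ ((T ^ nn k) x)‖) := by
                field_simp
            _ ≤ max M 1 * (‖(T ^ nn k) x‖⁻¹ * ‖f₀ ((T ^ nn k) x)‖) := by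
                apply mul_le_mul_of_nonneg_right hnorm
                positivity
            _ < max M 1 * (ε / max M 1) := by
                apply mul_lt_mul_of_pos_left hdist hM'
            _ = ε := by field_simp
      · -- some power kills x, so the orbit has only finitely many nonzero directions
        push_neg at hx
        obtain ⟨m, hm⟩ := hx
        have hall : ∀ j, m ≤ j → (T ^ j) x = 0 := by
          intro j hj
          have : (T ^ j) x = (T ^ (j - m)) ((T ^ m) x) := by
            conv_lhs => rw [show j = (j - m) + m by omega]
            rw [pow_add, ContinuousLinearMap.mul_apply]
          rw [this, hm, map_zero]
        have hfin : {k : ℕ | u k ≠ 0}.Finite := by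
          have hsub : {k : ℕ | u k ≠ 0} ⊆
              ⋃ n ∈ Finset.range m, {k : ℕ | u k ≠ 0 ∧ nn k = n} := by
            intro k hk
            simp only [Set.mem_iUnion, Finset.mem_range]
            refine ⟨nn k, ?_, hk, rfl⟩
            by_contra h
            exact hk (by rw [hrep k, hall (nn k) (by omega), smul_zero])
          exact Set.Finite.subset (Set.Finite.biUnion (Finset.range m).finite_toSet
            (fun n _ => hinf n)) hsub
        obtain ⟨K, hK⟩ : ∃ K : ℕ, ∀ k ≥ K, u k = 0 := by
          rcases Set.Finite.bddAbove hfin with ⟨K, hK⟩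
          refine ⟨K + 1, fun k hk => ?_⟩
          by_contra h
          have := hK h; omega
        have : (fun k => f₀ (u k)) =ᶠ[atTop] fun _ => 0 := by
          filter_upwards [eventually_ge_atTop K] with k hk
          rw [hK k hk, map_zero]
        exact Tendsto.congr' this.symm tendsto_const_nhds
    exact tendsto_nhds_unique (hconv f₀) key
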